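/- (The exit speed is independent of the shock position.) Let θ₀ ∈ (0, π/2), θ₁ ∈ (π/2, π), and u₀ ∈ (c_*, u_max) satisfy F(u₀)·sin θ₀ < F(c_*)·sin θ₁. Then there is a unique u₁ ∈ (0, c_*) with F(u₁)·sin θ₁ = F(u₀)·sin θ₀; and for every θ_b ∈ [θ₀, θ₁], every background transonic shock solution with shock at θ_b (i.e. continuous u⁻ : [θ₀, θ_b] → (c_*, u_max) and u⁺ : [θ_b, θ₁] → (0, c_*) with u⁻(θ₀) = u₀ and F(u^∓(θ))·sin θ = F(u₀)·sin θ₀ on their domains) has the same exit value u⁺(θ₁) = u₁. -/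

import Mathlib

open Real Set Filter Topology

/-- Maximal speed `u_max = √(2c₀²/(γ−1))`. -/
noncomputable def uMax (γ c₀ : ℝ) : ℝ := Real.sqrt (2 * c₀ ^ 2 / (γ - 1))

/-- Critical (sonic) speed `c_* = √(2c₀²/(γ+1))`. -/
noncomputable def cStar (γ c₀ : ℝ) : ℝ := Real.sqrt (2 * c₀ ^ 2 / (γ + 1))

/-- Local sonic speed `c(u) = √(c₀² − ((γ−1)/2)u²)`. -/
noncomputable def sonic (γ c₀ u : ℝ) : ℝ := Real.sqrt (c₀ ^ 2 - (γ - 1) / 2 * u ^ 2)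

/-- Density `ρ(u) = ((c₀² − ((γ−1)/2)u²)/γ)^{1/(γ−1)}`. -/
noncomputable def dens (γ c₀ u : ℝ) : ℝ :=
  ((c₀ ^ 2 - (γ - 1) / 2 * u ^ 2) / γ) ^ ((1 : ℝ) / (γ - 1))

/-- Mass flux `F(u) = ρ(u)·u`. -/
noncomputable def flux (γ c₀ u : ℝ) : ℝ := dens γ c₀ u * u

/-- Pressure `p(u) = ρ(u)^γ`. -/
noncomputable def pres (γ c₀ u : ℝ) : ℝ := dens γ c₀ u ^ γ

lemma cStar_sq (γ c₀ : ℝ) (hγ : 1 < γ) (hc₀ : 0 < c₀) :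
    cStar γ c₀ ^ 2 = 2 * c₀ ^ 2 / (γ + 1) := by
  apply Real.sq_sqrt
  positivity

lemma cStar_pos (γ c₀ : ℝ) (hγ : 1 < γ) (hc₀ : 0 < c₀) : 0 < cStar γ c₀ := by
  apply Real.sqrt_pos.2
  positivity

/-- On `[0, c_*]` the quantity `c₀² − ((γ−1)/2)u²` is positive. -/
lemma base_pos (γ c₀ x : ℝ) (hγ : 1 < γ) (hc₀ : 0 < c₀)
    (hx : x ∈ Set.Icc 0 (cStar γ c₀)) :
    0 < c₀ ^ 2 - (γ - 1) / 2 * x ^ 2 := by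
  have h2 : x ^ 2 ≤ cStar γ c₀ ^ 2 := by
    have := hx.1; have := hx.2; nlinarith
  rw [cStar_sq γ c₀ hγ hc₀] at h2
  rw [le_div_iff₀ (by linarith : (0:ℝ) < γ + 1)] at h2
  nlinarith [sq_nonneg x]

lemma base_pos' (γ c₀ x : ℝ) (hγ : 1 < γ) (hc₀ : 0 < c₀)
    (hx0 : 0 ≤ x) (hx : x < uMax γ c₀) :
    0 < c₀ ^ 2 - (γ - 1) / 2 * x ^ 2 := by
  have hγ1 : (0:ℝ) < γ - 1 := by linarith
  have h2 : x ^ 2 < uMax γ c₀ ^ 2 := by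
    have h0 : 0 ≤ uMax γ c₀ := Real.sqrt_nonneg _
    nlinarith
  rw [uMax, Real.sq_sqrt (by positivity), lt_div_iff₀ hγ1] at h2
  nlinarith [sq_nonneg x]

lemma dens_pos (γ c₀ x : ℝ) (hγ : 1 < γ) (hc₀ : 0 < c₀)
    (h : 0 < c₀ ^ 2 - (γ - 1) / 2 * x ^ 2) : 0 < dens γ c₀ x := by
  have hγ0 : (0:ℝ) < γ := by linarith
  exact Real.rpow_pos_of_pos (by positivity) _

lemma flux_contOn (γ c₀ : ℝ) (hγ : 1 < γ) (hc₀ : 0 < c₀) :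
    ContinuousOn (flux γ c₀) (Set.Icc 0 (cStar γ c₀)) := by
  have hγ0 : (0:ℝ) < γ := by linarith
  have hA : ContinuousOn (fun x : ℝ => (c₀ ^ 2 - (γ - 1) / 2 * x ^ 2) / γ)
      (Set.Icc 0 (cStar γ c₀)) := by fun_prop
  have h1 : ContinuousOn (fun x : ℝ =>
      ((c₀ ^ 2 - (γ - 1) / 2 * x ^ 2) / γ) ^ ((1:ℝ)/(γ-1)))
      (Set.Icc 0 (cStar γ c₀)) := by
    apply hA.rpow_const
    intro x hx
    left
    have := base_pos γ c₀ x hγ hc₀ hx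
    positivity
  have heq : flux γ c₀ = fun x : ℝ =>
      ((c₀ ^ 2 - (γ - 1) / 2 * x ^ 2) / γ) ^ ((1:ℝ)/(γ-1)) * x := by
    funext y; rfl
  rw [heq]
  exact h1.mul continuousOn_id

/-- `F` is strictly increasing on `[0, c_*]`. -/
lemma flux_strictMonoOn (γ c₀ : ℝ) (hγ : 1 < γ) (hc₀ : 0 < c₀) :
    StrictMonoOn (flux γ c₀) (Set.Icc 0 (cStar γ c₀)) := by
  have hγ0 : (0:ℝ) < γ := by linarith
  have hγ1 : (0:ℝ) < γ - 1 := by linarith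
  apply strictMonoOn_of_deriv_pos (convex_Icc _ _)
  · exact flux_contOn γ c₀ hγ hc₀
  · intro x hx
    rw [interior_Icc] at hx
    have hx0 : 0 < x := hx.1
    have hxm : x ∈ Set.Icc 0 (cStar γ c₀) := ⟨le_of_lt hx.1, le_of_lt hx.2⟩
    have hB : 0 < c₀ ^ 2 - (γ - 1) / 2 * x ^ 2 := base_pos γ c₀ x hγ hc₀ hxm
    set A : ℝ := (c₀ ^ 2 - (γ - 1) / 2 * x ^ 2) / γ with hAdef
    have hApos : 0 < A := by positivity
    set p : ℝ := (1:ℝ)/(γ-1) with hpdef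
    -- derivative of inner function
    have hInner : HasDerivAt (fun y : ℝ => (c₀ ^ 2 - (γ - 1) / 2 * y ^ 2) / γ)
        ((-( (γ - 1) * x)) / γ) x := by
      have h1 : HasDerivAt (fun y : ℝ => c₀ ^ 2 - (γ - 1) / 2 * y ^ 2)
          (-((γ - 1) * x)) x := by
        have := ((hasDerivAt_pow 2 x).const_mul ((γ - 1)/2)).const_sub (c₀ ^ 2)
        exact this.congr_deriv (by ring)
      exact h1.div_const γ
    have hrpow : HasDerivAt (fun y : ℝ => y ^ p) (p * A ^ (p - 1)) A :=
      Real.hasDerivAt_rpow_const (Or.inl (ne_of_gt hApos))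
    have hcomp : HasDerivAt (fun y : ℝ => ((c₀ ^ 2 - (γ - 1) / 2 * y ^ 2) / γ) ^ p)
        (p * A ^ (p - 1) * ((-( (γ - 1) * x)) / γ)) x := by
      have hc := hrpow.comp x hInner
      exact hc
    have hmul : HasDerivAt (fun y : ℝ =>
        ((c₀ ^ 2 - (γ - 1) / 2 * y ^ 2) / γ) ^ p * y)
        (p * A ^ (p - 1) * ((-( (γ - 1) * x)) / γ) * x + A ^ p * 1) x := by
      exact hcomp.mul (hasDerivAt_id' x)
    have hflux_eq : (fun y : ℝ => ((c₀ ^ 2 - (γ - 1) / 2 * y ^ 2) / γ) ^ p * y)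
        = flux γ c₀ := by
      funext y; simp [flux, dens, hpdef]
    rw [hflux_eq] at hmul
    rw [hmul.deriv]
    have hAp : A ^ p = A ^ (p - 1) * A := by
      have h := Real.rpow_add hApos (p - 1) 1
      rw [Real.rpow_one] at h
      rw [← h]
      norm_num
    have hsonic : 0 < c₀ ^ 2 - (γ + 1) / 2 * x ^ 2 := by
      have h2 : x ^ 2 < cStar γ c₀ ^ 2 := by
        have h0 : 0 ≤ cStar γ c₀ := Real.sqrt_nonneg _
        nlinarith [hx.2]
      rw [cStar_sq γ c₀ hγ hc₀, lt_div_iff₀ (by linarith : (0:ℝ) < γ + 1)] at h2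
      nlinarith
    have key : p * A ^ (p - 1) * ((-( (γ - 1) * x)) / γ) * x + A ^ p * 1
        = A ^ (p - 1) * ((c₀ ^ 2 - (γ + 1) / 2 * x ^ 2) / γ) := by
      rw [hAp, hpdef, hAdef]
      field_simp
      ring
    rw [key]
    have := Real.rpow_pos_of_pos hApos (p - 1)
    positivity

/-- the exit speed is independent of the shock position: there is a unique
`u₁ ∈ (0, c_*)` with `F(u₁) sin θ₁ = F(u₀) sin θ₀`, and every background transonic shock
solution, whatever its shock position `θ_b`, has exit value `u⁺(θ₁) = u₁`. -/
theorem exit_speed_independent_of_shock_position (γ c₀ θ₀ θ₁ u₀ : ℝ)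
    (hγ : 1 < γ) (hc₀ : 0 < c₀)
    (hθ₀ : θ₀ ∈ Set.Ioo 0 (π / 2)) (hθ₁ : θ₁ ∈ Set.Ioo (π / 2) π)
    (hu₀ : u₀ ∈ Set.Ioo (cStar γ c₀) (uMax γ c₀))
    (hflux : flux γ c₀ u₀ * Real.sin θ₀ < flux γ c₀ (cStar γ c₀) * Real.sin θ₁) :
    (∃! u₁, u₁ ∈ Set.Ioo 0 (cStar γ c₀) ∧
      flux γ c₀ u₁ * Real.sin θ₁ = flux γ c₀ u₀ * Real.sin θ₀) ∧
    ∀ u₁ ∈ Set.Ioo 0 (cStar γ c₀),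
      flux γ c₀ u₁ * Real.sin θ₁ = flux γ c₀ u₀ * Real.sin θ₀ →
      ∀ θb ∈ Set.Icc θ₀ θ₁, ∀ um up : ℝ → ℝ,
        ContinuousOn um (Set.Icc θ₀ θb) →
        (∀ θ ∈ Set.Icc θ₀ θb, um θ ∈ Set.Ioo (cStar γ c₀) (uMax γ c₀)) →
        um θ₀ = u₀ →
        (∀ θ ∈ Set.Icc θ₀ θb,
          flux γ c₀ (um θ) * Real.sin θ = flux γ c₀ u₀ * Real.sin θ₀) →
        ContinuousOn up (Set.Icc θb θ₁) →
        (∀ θ ∈ Set.Icc θb θ₁, up θ ∈ Set.Ioo 0 (cStar γ c₀)) →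
        (∀ θ ∈ Set.Icc θb θ₁,
          flux γ c₀ (up θ) * Real.sin θ = flux γ c₀ u₀ * Real.sin θ₀) →
        up θ₁ = u₁ := by
  have hmono := flux_strictMonoOn γ c₀ hγ hc₀
  have hcs : 0 < cStar γ c₀ := cStar_pos γ c₀ hγ hc₀
  have hsin₀ : 0 < Real.sin θ₀ := Real.sin_pos_of_pos_of_lt_pi hθ₀.1
    (lt_trans hθ₀.2 (by linarith [Real.pi_pos]))
  have hsin₁ : 0 < Real.sin θ₁ := Real.sin_pos_of_pos_of_lt_pi
    (lt_trans (by linarith [Real.pi_pos]) hθ₁.1) hθ₁.2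
  have hu₀pos : 0 < u₀ := lt_trans hcs hu₀.1
  have hflux₀pos : 0 < flux γ c₀ u₀ := by
    have := dens_pos γ c₀ u₀ hγ hc₀
      (base_pos' γ c₀ u₀ hγ hc₀ (le_of_lt hu₀pos) hu₀.2)
    exact mul_pos this hu₀pos
  -- uniqueness lemma
  have huniq : ∀ a ∈ Set.Ioo 0 (cStar γ c₀), ∀ b ∈ Set.Ioo 0 (cStar γ c₀),
      flux γ c₀ a * Real.sin θ₁ = flux γ c₀ b * Real.sin θ₁ → a = b := by
    intro a ha b hb hab
    have hfa : flux γ c₀ a = flux γ c₀ b :=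
      mul_right_cancel₀ (ne_of_gt hsin₁) hab
    exact hmono.injOn (Set.mem_Icc_of_Ioo ha) (Set.mem_Icc_of_Ioo hb) hfa
  constructor
  · -- existence and uniqueness
    have hflux0 : flux γ c₀ 0 = 0 := by simp [flux]
    set t : ℝ := flux γ c₀ u₀ * Real.sin θ₀ / Real.sin θ₁ with ht
    have htpos : 0 < t := by positivity
    have htlt : t < flux γ c₀ (cStar γ c₀) := by
      rw [ht, div_lt_iff₀ hsin₁]
      exact hflux
    have hcont := flux_contOn γ c₀ hγ hc₀
    have hmem : t ∈ Set.Ioo (flux γ c₀ 0) (flux γ c₀ (cStar γ c₀)) := by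
      rw [hflux0]; exact ⟨htpos, htlt⟩
    obtain ⟨u₁, hu₁mem, hu₁val⟩ :=
      intermediate_value_Ioo (le_of_lt hcs) hcont hmem
    refine ⟨u₁, ⟨hu₁mem, ?_⟩, ?_⟩
    · rw [hu₁val, ht]
      field_simp
    · rintro y ⟨hymem, hyval⟩
      apply huniq y hymem u₁ hu₁mem
      rw [hyval, hu₁val, ht]
      field_simp
  · -- independence of shock position
    intro u₁ hu₁ hu₁val θb hθb um up hcm humem hum0 humflux hcp hupmem hupflux
    have hθ₁mem : θ₁ ∈ Set.Icc θb θ₁ := ⟨hθb.2, le_refl _⟩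
    exact huniq (up θ₁) (hupmem θ₁ hθ₁mem) u₁ hu₁
      ((hupflux θ₁ hθ₁mem).trans hu₁val.symm)
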